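/- The operator T_θ on H ⊕ ℂ is normal (i.e. commutes with its Hilbert-space adjoint, T_θ* ∘ T_θ = T_θ ∘ T_θ*) if and only if U ξ = ξ. -/

import Mathlib

open scoped InnerProductSpace

noncomputable section

variable {H : Type*} [NormedAddCommGroup H] [InnerProductSpace ℂ H]

/-- The vector `(x, z)` of the Hilbert space direct sum `H ⊕ ℂ`. -/
def mkE (x : H) (z : ℂ) : WithLp 2 (H × ℂ) := (WithLp.equiv 2 (H × ℂ)).symm (x, z)

/-- With `ξ ≠ 0`, `a = √(1 + ‖ξ‖²)`, `A x = x + ((a−1)/‖ξ‖²)·⟨x,ξ⟩·ξ`, `U` unitary, `θ ∈ ℝ`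
and `T_θ(x,z) = e^{iθ}·(U(A x) + z·U ξ, ⟨x,ξ⟩ + a·z)`: the operator `T_θ` is normal
(`T_θ* ∘ T_θ = T_θ ∘ T_θ*`) iff `U ξ = ξ`.
(The paper's inner product `⟨x,y⟩` is linear in the first slot, i.e. `⟪y,x⟫_ℂ` in Mathlib's
convention.) -/
theorem stmt10 [CompleteSpace H]
    (ξ : H) (hξ : ξ ≠ 0) (a : ℝ) (ha : a = Real.sqrt (1 + ‖ξ‖ ^ 2))
    (A : H →L[ℂ] H)
    (hA : ∀ x : H, A x = x + ((((a - 1) / ‖ξ‖ ^ 2 : ℝ) : ℂ) * ⟪ξ, x⟫_ℂ) • ξ)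
    (U : H →L[ℂ] H) (hU : U ∈ unitary (H →L[ℂ] H)) (θ : ℝ)
    (T : WithLp 2 (H × ℂ) →L[ℂ] WithLp 2 (H × ℂ))
    (hT : ∀ (x : H) (z : ℂ),
      T (mkE x z) =
        Complex.exp (θ * Complex.I) • mkE (U (A x) + z • U ξ) (⟪ξ, x⟫_ℂ + (a : ℂ) * z)) :
    ContinuousLinearMap.adjoint T ∘L T = T ∘L ContinuousLinearMap.adjoint T ↔ U ξ = ξ := by
  set c : ℂ := (((a - 1) / ‖ξ‖ ^ 2 : ℝ) : ℂ) with hcdef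
  have hn0 : (‖ξ‖ : ℝ) ≠ 0 := norm_ne_zero_iff.2 hξ
  have hn2 : (‖ξ‖ ^ 2 : ℝ) ≠ 0 := pow_ne_zero _ hn0
  have ha0 : (0:ℝ) < a := by rw [ha]; positivity
  have hnorm : ⟪ξ, ξ⟫_ℂ = ((‖ξ‖ ^ 2 : ℝ) : ℂ) := by
    rw [inner_self_eq_norm_sq_to_K]; norm_cast
  have hc : c * ((‖ξ‖ ^ 2 : ℝ) : ℂ) = (a : ℂ) - 1 := by
    rw [hcdef]; push_cast
    rw [div_mul_cancel₀]
    exact_mod_cast hn2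
  have hAξ : A ξ = (a : ℂ) • ξ := by
    rw [hA, hnorm, hc]
    rw [sub_smul, one_smul]; abel
  have hinnerA : ∀ x : H, ⟪ξ, A x⟫_ℂ = (a : ℂ) * ⟪ξ, x⟫_ℂ := by
    intro x
    rw [hA, inner_add_right, inner_smul_right, hnorm]
    linear_combination ⟪ξ, x⟫_ℂ * hc
  have hAsym : ∀ u v : H, ⟪A u, v⟫_ℂ = ⟪u, A v⟫_ℂ := by
    intro u v
    rw [hA u, hA v, inner_add_left, inner_add_right, inner_smul_left, inner_smul_right]
    rw [map_mul, inner_conj_symm, Complex.conj_ofReal]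
    ring
  have hA2 : ∀ x : H, A (A x) = x + (((1 + a : ℂ) * c) * ⟪ξ, x⟫_ℂ) • ξ := by
    intro x
    rw [hA (A x), hinnerA x, hA x]
    module
  -- unitarity
  have hVU : ∀ y : H, ContinuousLinearMap.adjoint U (U y) = y := by
    intro y
    have h1 : star U * U = 1 := hU.1
    rw [ContinuousLinearMap.star_eq_adjoint] at h1
    calc ContinuousLinearMap.adjoint U (U y) = (ContinuousLinearMap.adjoint U * U) y := rfl
      _ = y := by rw [h1]; rfl
  have hUV : ∀ y : H, U (ContinuousLinearMap.adjoint U y) = y := by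
    intro y
    have h1 : U * star U = 1 := hU.2
    rw [ContinuousLinearMap.star_eq_adjoint] at h1
    calc U (ContinuousLinearMap.adjoint U y) = (U * ContinuousLinearMap.adjoint U) y := rfl
      _ = y := by rw [h1]; rfl
  -- the adjoint of T
  set e : WithLp 2 (H × ℂ) ≃L[ℂ] H × ℂ := WithLp.prodContinuousLinearEquiv 2 ℂ H ℂ with he
  set F1 : H × ℂ →L[ℂ] H :=
    (A ∘L ContinuousLinearMap.adjoint U) ∘L ContinuousLinearMap.fst ℂ H ℂ
      + (ContinuousLinearMap.snd ℂ H ℂ).smulRight ξ with hF1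
  set G1 : H × ℂ →L[ℂ] ℂ :=
    (innerSL ℂ (U ξ)) ∘L ContinuousLinearMap.fst ℂ H ℂ
      + (a : ℂ) • ContinuousLinearMap.snd ℂ H ℂ with hG1
  set S : WithLp 2 (H × ℂ) →L[ℂ] WithLp 2 (H × ℂ) :=
    Complex.exp (-θ * Complex.I) •
      ((e.symm : (H × ℂ) →L[ℂ] WithLp 2 (H × ℂ)) ∘L (F1.prod G1) ∘L (e : _ →L[ℂ] _)) with hSdef
  have hS : ∀ (y : H) (w : ℂ), S (mkE y w) =
      Complex.exp (-θ * Complex.I) •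
        mkE (A (ContinuousLinearMap.adjoint U y) + w • ξ) (⟪U ξ, y⟫_ℂ + (a : ℂ) * w) := by
    intro y w
    simp [hSdef, hF1, hG1, he, mkE]
  have hadj : S = ContinuousLinearMap.adjoint T := by
    rw [ContinuousLinearMap.eq_adjoint_iff]
    have key : ∀ (y : H) (w : ℂ) (x : H) (z : ℂ),
        ⟪S (mkE y w), mkE x z⟫_ℂ = ⟪mkE y w, T (mkE x z)⟫_ℂ := by
      intro y w x z
      rw [hS, hT]
      simp only [inner_smul_left, inner_smul_right, WithLp.prod_inner_apply, mkE,
        WithLp.equiv_symm_apply, WithLp.ofLp_toLp, inner_add_left, inner_add_right,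
        inner_smul_left, inner_smul_right, RCLike.inner_apply, map_add, map_mul,
        inner_conj_symm, Complex.conj_ofReal, ContinuousLinearMap.adjoint_inner_left,
        ← Complex.exp_conj, Complex.conj_I, map_neg, neg_mul, neg_neg]
      rw [hAsym, ContinuousLinearMap.adjoint_inner_left]
      ring
    intro u v
    exact key u.ofLp.1 u.ofLp.2 v.ofLp.1 v.ofLp.2
  have hexp1 : Complex.exp (θ * Complex.I) * Complex.exp (-θ * Complex.I) = 1 := by
    rw [← Complex.exp_add]; ring_nf; exact Complex.exp_zero
  have hexp2 : Complex.exp (-θ * Complex.I) * Complex.exp (θ * Complex.I) = 1 := by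
    rw [← Complex.exp_add]; ring_nf; exact Complex.exp_zero
  constructor
  · intro h
    have h01 := DFunLike.congr_fun h (mkE 0 1)
    rw [ContinuousLinearMap.comp_apply, ContinuousLinearMap.comp_apply, ← hadj] at h01
    rw [hT, map_smul, hS, hS, map_smul, hT] at h01
    simp only [map_zero, zero_add, one_smul, inner_zero_right, mul_one, add_zero,
      smul_smul, hexp1, hexp2, map_add, map_smul, hVU, hAξ] at h01
    have h1 := congrArg (fun v => (WithLp.equiv 2 (H × ℂ) v).1) h01
    simp only [mkE, Equiv.apply_symm_apply] at h1
    have h2 : ((2:ℂ) * a) • ξ = ((2:ℂ) * a) • U ξ := by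
      rw [mul_smul, mul_smul, two_smul, two_smul]
      exact h1
    have hane : ((2:ℂ) * a) ≠ 0 := by
      simp only [ne_eq, mul_eq_zero, not_or]
      constructor
      · norm_num
      · exact_mod_cast ha0.ne'
    exact (smul_right_injective H hane h2).symm
  · intro hUξ
    have hVξ : ContinuousLinearMap.adjoint U ξ = ξ := by
      conv_lhs => rw [← hUξ]
      exact hVU ξ
    have hinnerU : ∀ x : H, ⟪ξ, U x⟫_ℂ = ⟪ξ, x⟫_ℂ := by
      intro x
      rw [← ContinuousLinearMap.adjoint_inner_left, hVξ]
    have hinnerV : ∀ x : H, ⟪ξ, ContinuousLinearMap.adjoint U x⟫_ℂ = ⟪ξ, x⟫_ℂ := by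
      intro x
      rw [ContinuousLinearMap.adjoint_inner_right, hUξ]
    refine ContinuousLinearMap.ext fun v => ?_
    rw [ContinuousLinearMap.comp_apply, ContinuousLinearMap.comp_apply, ← hadj]
    have hv : v = mkE v.ofLp.1 v.ofLp.2 := rfl
    rw [hv, hT, map_smul, hS, hS, map_smul, hT]
    rw [smul_smul, smul_smul, hexp1, hexp2, one_smul, one_smul]
    unfold mkE
    refine congrArg _ (Prod.ext ?_ ?_)
    · show A (ContinuousLinearMap.adjoint U (U (A v.ofLp.1) + v.ofLp.2 • U ξ)) + (⟪ξ, v.ofLp.1⟫_ℂ + a * v.ofLp.2) • ξ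
        = U (A (A (ContinuousLinearMap.adjoint U v.ofLp.1) + v.ofLp.2 • ξ)) + (⟪U ξ, v.ofLp.1⟫_ℂ + a * v.ofLp.2) • U ξ
      simp only [map_add, map_smul, hVU, hUV, hA2, hAξ, hUξ, hVξ, hinnerV, smul_add]
      try module
    · show ⟪U ξ, U (A v.ofLp.1) + v.ofLp.2 • U ξ⟫_ℂ + (a:ℂ) * (⟪ξ, v.ofLp.1⟫_ℂ + a * v.ofLp.2)
        = ⟪ξ, A (ContinuousLinearMap.adjoint U v.ofLp.1) + v.ofLp.2 • ξ⟫_ℂ + (a:ℂ) * (⟪U ξ, v.ofLp.1⟫_ℂ + a * v.ofLp.2)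
      simp only [hUξ, inner_add_right, inner_smul_right, hinnerU, hinnerA, hinnerV, hnorm]
      try ring

end
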